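/- Let n, k ≥ 1 and α, β ∈ {1,…,k}ⁿ. If the sorted rearrangement of α is strictly smaller than the sorted rearrangement of β in the lexicographic order, then there exists an index i with α_i < β_i. -/

import Mathlib

/-- The non-decreasing (sorted) rearrangement of a tuple. -/
def nd {n k : ℕ} (α : Fin n → Fin k) : Fin n → Fin k := α ∘ Tuple.sort α

/-- Lexicographic strict order on tuples: they agree before `i` and `α i < β i`. -/
def lexLt {n k : ℕ} (α β : Fin n → Fin k) : Prop :=
  ∃ i, (∀ j, j < i → α j = β j) ∧ α i < β i

theorem nd_le_nd {n k : ℕ} (α β : Fin n → Fin k) (hle : ∀ i, β i ≤ α i) (j : Fin n) :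
    nd β j ≤ nd α j := by
  have hma : Monotone (nd α) := Tuple.monotone_sort α
  have hmb : Monotone (nd β) := Tuple.monotone_sort β
  set a := nd α j with ha
  have h1 : (j : ℕ) < Fintype.card {i // nd α i ≤ a} :=
    by rw [Fintype.card_subtype]; exact (Tuple.lt_card_le_iff_apply_le_of_monotone (j := j) (a := a) hma).mpr le_rfl
  have h2 : Fintype.card {i // nd α i ≤ a} ≤ Fintype.card {i // nd β i ≤ a} := by
    have e1 : Fintype.card {i // nd α i ≤ a} = Fintype.card {i // α i ≤ a} :=
      Fintype.card_congr ((Tuple.sort α).subtypeEquiv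
        (fun i => (Iff.rfl : nd α i ≤ a ↔ α (Tuple.sort α i) ≤ a)))
    have e2 : Fintype.card {i // nd β i ≤ a} = Fintype.card {i // β i ≤ a} :=
      Fintype.card_congr ((Tuple.sort β).subtypeEquiv
        (fun i => (Iff.rfl : nd β i ≤ a ↔ β (Tuple.sort β i) ≤ a)))
    rw [e1, e2]
    exact Fintype.card_subtype_mono _ _ (fun i hi => le_trans (hle i) hi)
  exact (Tuple.lt_card_le_iff_apply_le_of_monotone (j := j) (a := a) hmb).mp (by rw [← Fintype.card_subtype]; exact lt_of_lt_of_le h1 h2)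

/-- If `nd α <_lex nd β`, then `α i < β i` for some `i`. -/
theorem stmt4 (n k : ℕ) (hn : 1 ≤ n) (hk : 1 ≤ k) (α β : Fin n → Fin k)
    (h : lexLt (nd α) (nd β)) : ∃ i, α i < β i := by
  by_contra hc
  push_neg at hc
  obtain ⟨i, -, hi⟩ := h
  exact absurd (nd_le_nd α β hc i) (not_le.mpr hi)
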